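/- Let n ≥ 2 and let x ∈ ℝ^n satisfy ∑_{i=1}^n x_i = 0. For distinct i, j let A_{ij}x denote the vector obtained from x by the pair-averaging operation at {i,j}. Then the average over all C(n,2) unordered pairs {i,j} of ∑_{l=1}^n (A_{ij}x)_l² equals (1 − 1/(n−1)) ∑_{l=1}^n x_l². Equivalently, for the repeated averaging chain, E(S(k+1) | F_k) = (1 − 1/(n−1)) S(k), where S(k) = ∑_{i=1}^n x_{k,i}². -/

import Mathlib

open MeasureTheory Finset Filter
open scoped ENNReal NNReal

/-- The set of unordered pairs of distinct indices in `Fin n`, encoded as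
2-element subsets of `Fin n`. -/
abbrev Pairs (n : ℕ) : Type := {s : Finset (Fin n) // s.card = 2}

instance (n : ℕ) : MeasurableSpace (Pairs n) := ⊤

/-- The uniform probability measure on the set of pairs. -/
noncomputable def uniformPair (n : ℕ) : Measure (Pairs n) :=
  (Fintype.card (Pairs n) : ℝ≥0∞)⁻¹ • Measure.count

/-- `μ` is the infinite product over `ℕ` of the uniform measure on pairs:
its finite-dimensional marginals are the finite uniform product measures.
(This characterizes the infinite product measure uniquely.) -/
def IsProductLaw (n : ℕ) (μ : Measure (ℕ → Pairs n)) : Prop :=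
  ∀ K : ℕ, μ.map (fun ω (i : Fin K) => ω i) = Measure.pi fun _ : Fin K => uniformPair n

/-- The pair-averaging operation: both coordinates in `s` (a 2-element set `{i,j}`)
are replaced by `(x i + x j)/2`; the other coordinates are unchanged. -/
noncomputable def avgStep {n : ℕ} (s : Finset (Fin n)) (x : Fin n → ℝ) : Fin n → ℝ :=
  fun l => if l ∈ s then (∑ m ∈ s, x m) / 2 else x l

/-- The repeated averaging chain started at `x0`, driven by the pair sequence `ω`. -/
noncomputable def chain {n : ℕ} (x0 : Fin n → ℝ) (ω : ℕ → Pairs n) : ℕ → Fin n → ℝ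
  | 0 => x0
  | k + 1 => avgStep (ω k).1 (chain x0 ω k)

/-- `T(k) = ∑_i |x_{k,i} - 1/n|`. -/
noncomputable def Tdist {n : ℕ} (x0 : Fin n → ℝ) (ω : ℕ → Pairs n) (k : ℕ) : ℝ :=
  ∑ i, |chain x0 ω k i - 1 / n|

/-- The initial vector `(1,0,…,0)`. -/
def e1 (n : ℕ) : Fin n → ℝ := fun i => if i.val = 0 then 1 else 0

/-- The standard normal cumulative distribution function. -/
noncomputable def stdGaussianCDF (x : ℝ) : ℝ :=
  ∫ t in Set.Iic x, (2 * Real.pi) ^ (-(1:ℝ)/2) * Real.exp (-t ^ 2 / 2)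

section AuxLemmas

variable {n : ℕ}

lemma offDiag_sum (g : Fin n → Fin n → ℝ) :
    ∑ p ∈ (univ : Finset (Fin n)).offDiag, g p.1 p.2
      = (∑ i, ∑ j, g i j) - ∑ i, g i i := by
  rw [show (univ : Finset (Fin n)).offDiag
      = (univ ×ˢ univ).filter (fun a : Fin n × Fin n => a.1 ≠ a.2) by ext; simp,
    Finset.sum_filter, Finset.sum_product, ← Finset.sum_sub_distrib]
  refine Finset.sum_congr rfl fun i _ => ?_
  have : ∀ j : Fin n, (if (i, j).1 ≠ (i, j).2 then g i j else 0)
      = g i j - (if i = j then g i j else 0) := by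
    intro j; by_cases h : i = j <;> simp [h]
  rw [Finset.sum_congr rfl fun j _ => this j, Finset.sum_sub_distrib,
    Finset.sum_ite_eq, if_pos (mem_univ i)]

lemma fib (F : Finset (Fin n) → ℝ) :
    ∑ p ∈ (univ : Finset (Fin n)).offDiag, F {p.1, p.2}
      = 2 * ∑ s ∈ (univ : Finset (Fin n)).powersetCard 2, F s := by
  have hmap : ∀ p ∈ (univ : Finset (Fin n)).offDiag,
      ({p.1, p.2} : Finset (Fin n)) ∈ (univ : Finset (Fin n)).powersetCard 2 := by
    intro p hp
    rw [Finset.mem_offDiag] at hp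
    exact Finset.mem_powersetCard_univ.2 (Finset.card_pair hp.2.2)
  rw [← Finset.sum_fiberwise_of_maps_to hmap (fun p => F {p.1, p.2}), Finset.mul_sum]
  refine Finset.sum_congr rfl fun y hy => ?_
  obtain ⟨i, j, hij, rfl⟩ := Finset.card_eq_two.mp (Finset.mem_powersetCard_univ.mp hy)
  have hfil : ((univ : Finset (Fin n)).offDiag.filter
      fun p => ({p.1, p.2} : Finset (Fin n)) = {i, j}) = {(i, j), (j, i)} := by
    ext ⟨a, b⟩
    simp only [Finset.mem_filter, Finset.mem_offDiag, Finset.mem_univ, true_and,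
      Finset.mem_insert, Finset.mem_singleton, Prod.mk.injEq]
    constructor
    · rintro ⟨hab, h⟩
      rw [← Finset.coe_inj] at h
      simp only [Finset.coe_insert, Finset.coe_singleton] at h
      rcases Set.pair_eq_pair_iff.mp h with ⟨h1, h2⟩ | ⟨h1, h2⟩
      · exact Or.inl ⟨h1, h2⟩
      · exact Or.inr ⟨h1, h2⟩
    · rintro (⟨rfl, rfl⟩ | ⟨rfl, rfl⟩)
      · exact ⟨hij, rfl⟩
      · exact ⟨hij.symm, Finset.pair_comm _ _⟩
  rw [hfil]
  have hne : ((i, j) : Fin n × Fin n) ≠ (j, i) := by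
    simp [Prod.ext_iff]; intro h; exact absurd h hij
  rw [Finset.sum_pair hne]
  have h1 : ({(i,j).1, (i,j).2} : Finset (Fin n)) = {i, j} := rfl
  have h2 : ({(j,i).1, (j,i).2} : Finset (Fin n)) = {i, j} := Finset.pair_comm _ _
  rw [h1, h2]; ring
end AuxLemmas

/-- **Proposition (one-step `L²` contraction).** If `∑ x_i = 0`, the average over all
`C(n,2)` unordered pairs `{i,j}` of `∑ₗ (A_{ij}x)ₗ²` equals `(1 - 1/(n-1)) ∑ₗ xₗ²`;
equivalently `E(S(k+1) | F_k) = (1 - 1/(n-1)) S(k)` for the repeated averaging chain. -/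
theorem one_step_L2_contraction (n : ℕ) (hn : 2 ≤ n)
    (x : Fin n → ℝ) (hx : ∑ i, x i = 0) :
    (∑ s : Pairs n, ∑ l, (avgStep s.1 x l) ^ 2) / ((n : ℝ) * ((n : ℝ) - 1) / 2)
      = (1 - 1 / ((n : ℝ) - 1)) * ∑ l, x l ^ 2 := by
  set S := ∑ l, x l ^ 2 with hS
  -- per-pair formula
  have key : ∀ s : Finset (Fin n), s.card = 2 →
      ∑ l, (avgStep s x l) ^ 2
        = S - (∑ l ∈ s, x l ^ 2) + (∑ l ∈ s, x l) ^ 2 / 2 := by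
    intro s hs
    have h1 : ∑ l ∈ univ \ s, (avgStep s x l) ^ 2 = ∑ l ∈ univ \ s, x l ^ 2 :=
      Finset.sum_congr rfl fun l hl => by
        simp [avgStep, (Finset.mem_sdiff.mp hl).2]
    have h2 : ∑ l ∈ s, (avgStep s x l) ^ 2 = (∑ l ∈ s, x l) ^ 2 / 2 := by
      have : ∑ l ∈ s, (avgStep s x l) ^ 2
          = ∑ l ∈ s, ((∑ m ∈ s, x m) / 2) ^ 2 :=
        Finset.sum_congr rfl fun l hl => by simp [avgStep, hl]
      rw [this, Finset.sum_const, hs]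
      push_cast; ring
    calc ∑ l, (avgStep s x l) ^ 2
        = ∑ l ∈ univ \ s, (avgStep s x l) ^ 2 + ∑ l ∈ s, (avgStep s x l) ^ 2 :=
          (Finset.sum_sdiff (subset_univ s)).symm
      _ = (S - ∑ l ∈ s, x l ^ 2) + (∑ l ∈ s, x l) ^ 2 / 2 := by
          rw [h1, h2, Finset.sum_sdiff_eq_sub (subset_univ s)]
  -- pass from the subtype sum to the powersetCard sum
  have hsub : (∑ s : Pairs n, ∑ l, (avgStep s.1 x l) ^ 2)
      = ∑ s ∈ (univ : Finset (Fin n)).powersetCard 2, ∑ l, (avgStep s x l) ^ 2 :=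
    (Finset.sum_subtype ((univ : Finset (Fin n)).powersetCard 2)
      (fun s => Finset.mem_powersetCard_univ)
      (fun s => ∑ l, (avgStep s x l) ^ 2)).symm
  -- combinatorial sums
  have hF1 : ∑ s ∈ (univ : Finset (Fin n)).powersetCard 2, (∑ l ∈ s, x l ^ 2)
      = ((n : ℝ) - 1) * S := by
    have := fib (n := n) (fun s => ∑ l ∈ s, x l ^ 2)
    have hcong : ∑ p ∈ (univ : Finset (Fin n)).offDiag,
        (∑ l ∈ ({p.1, p.2} : Finset (Fin n)), x l ^ 2)
        = ∑ p ∈ (univ : Finset (Fin n)).offDiag, (x p.1 ^ 2 + x p.2 ^ 2) :=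
      Finset.sum_congr rfl fun p hp => by
        rw [Finset.sum_pair (Finset.mem_offDiag.mp hp).2.2]
    rw [hcong, offDiag_sum (fun i j => x i ^ 2 + x j ^ 2)] at this
    have hin : ∑ i : Fin n, ∑ j : Fin n, (x i ^ 2 + x j ^ 2)
        = (n : ℝ) * S + (n : ℝ) * S := by
      have : ∀ i : Fin n, ∑ j : Fin n, (x i ^ 2 + x j ^ 2) = (n : ℝ) * x i ^ 2 + S := by
        intro i
        rw [Finset.sum_add_distrib, Finset.sum_const, card_univ, Fintype.card_fin,
          nsmul_eq_mul]
      rw [Finset.sum_congr rfl fun i _ => this i, Finset.sum_add_distrib,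
        ← Finset.mul_sum, Finset.sum_const, card_univ, Fintype.card_fin, nsmul_eq_mul]
    rw [hin] at this
    have hdiag : ∑ i : Fin n, (x i ^ 2 + x i ^ 2) = 2 * S := by
      rw [Finset.sum_add_distrib]; ring
    rw [hdiag] at this
    linarith
  have hF2 : ∑ s ∈ (univ : Finset (Fin n)).powersetCard 2, (∑ l ∈ s, x l) ^ 2
      = ((n : ℝ) - 2) * S := by
    have := fib (n := n) (fun s => (∑ l ∈ s, x l) ^ 2)
    have hcong : ∑ p ∈ (univ : Finset (Fin n)).offDiag,
        (∑ l ∈ ({p.1, p.2} : Finset (Fin n)), x l) ^ 2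
        = ∑ p ∈ (univ : Finset (Fin n)).offDiag, (x p.1 + x p.2) ^ 2 :=
      Finset.sum_congr rfl fun p hp => by
        rw [Finset.sum_pair (Finset.mem_offDiag.mp hp).2.2]
    rw [hcong, offDiag_sum (fun i j => (x i + x j) ^ 2)] at this
    have hin : ∑ i : Fin n, ∑ j : Fin n, (x i + x j) ^ 2 = 2 * (n : ℝ) * S := by
      have : ∀ i : Fin n, ∑ j : Fin n, (x i + x j) ^ 2 = (n : ℝ) * x i ^ 2 + S := by
        intro i
        have expand : ∀ j : Fin n, (x i + x j) ^ 2
            = x i ^ 2 + (2 * x i) * x j + x j ^ 2 := fun j => by ring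
        rw [Finset.sum_congr rfl fun j _ => expand j, Finset.sum_add_distrib,
          Finset.sum_add_distrib, ← Finset.mul_sum, hx, Finset.sum_const, card_univ,
          Fintype.card_fin, nsmul_eq_mul]
        ring
      rw [Finset.sum_congr rfl fun i _ => this i, Finset.sum_add_distrib,
        ← Finset.mul_sum, Finset.sum_const, card_univ, Fintype.card_fin, nsmul_eq_mul]
      ring
    have hdiag : ∑ i : Fin n, (x i + x i) ^ 2 = 4 * S := by
      have : ∀ i : Fin n, (x i + x i) ^ 2 = 4 * x i ^ 2 := fun i => by ring
      rw [Finset.sum_congr rfl fun i _ => this i, ← Finset.mul_sum]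
    rw [hin, hdiag] at this
    linarith
  have hcard : ((univ : Finset (Fin n)).powersetCard 2).card = n.choose 2 := by
    rw [Finset.card_powersetCard, card_univ, Fintype.card_fin]
  have htot : (∑ s : Pairs n, ∑ l, (avgStep s.1 x l) ^ 2)
      = (n : ℝ) * ((n : ℝ) - 1) / 2 * S - ((n : ℝ) - 1) * S + ((n : ℝ) - 2) * S / 2 := by
    rw [hsub, Finset.sum_congr rfl fun s hs => key s (Finset.mem_powersetCard_univ.mp hs)]
    rw [Finset.sum_add_distrib, Finset.sum_sub_distrib, Finset.sum_const, hcard,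
      nsmul_eq_mul, hF1, ← Finset.sum_div, hF2, Nat.cast_choose_two]
  rw [htot]
  have hn1 : (n : ℝ) - 1 ≠ 0 := by
    have : (2 : ℝ) ≤ (n : ℝ) := by exact_mod_cast hn
    linarith
  field_simp
  ring
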